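/- arXiv:1203.6870 — 3 statements merged into one kernel-verified Lean document; each statement's English description precedes it below -/
import Mathlib

section
/- Let R be a discrete valuation ring with fraction field K and uniformizer π, let u ∈ Rˣ be a unit, and let n ≥ 1 be an integer. Let L = K[X]/(X^n − u·π) and let T denote the image of X in L. Then for every integer q with 0 ≤ q < n and every c ∈ K, if the element c·T^q of L is integral over R, then c ∈ R. -/
open Polynomial

/-- Let `R` be a discrete valuation ring with fraction field `K` and uniformizer `π`,
`u ∈ Rˣ` a unit, `n ≥ 1`. Let `L = K[X]/(X^n - u·π)` and let `T` denote the image of `X`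
in `L`. For every `q` with `0 ≤ q < n` and every `c ∈ K`, if the element `c·T^q` of `L`
is integral over `R`, then `c ∈ R` (i.e. `c` is in the image of `R → K`). -/
theorem stmt_0 (R K : Type*) [CommRing R] [IsDomain R] [IsDiscreteValuationRing R]
    [Field K] [Algebra R K] [IsFractionRing R K]
    (π : R) (hπ : Irreducible π) (u : Rˣ) (n : ℕ) (hn : 1 ≤ n)
    (q : ℕ) (hq : q < n) (c : K)
    (hint : IsIntegral R
      (algebraMap K (AdjoinRoot (X ^ n - C (algebraMap R K ((u : R) * π)))) c *
        (AdjoinRoot.root (X ^ n - C (algebraMap R K ((u : R) * π)))) ^ q)) :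
    ∃ r : R, algebraMap R K r = c := by
  set a : K := algebraMap R K ((u : R) * π) with ha
  set p : K[X] := X ^ n - C a with hp
  set L := AdjoinRoot p
  haveI : Nontrivial L := by
    refine AdjoinRoot.nontrivial p ?_
    rw [hp, degree_X_pow_sub_C (by omega) a]
    exact_mod_cast (by omega : n ≠ 0)
  have hroot : (AdjoinRoot.root p) ^ n = algebraMap K L a := by
    have h := AdjoinRoot.eval₂_root p
    rw [hp] at h
    simp only [eval₂_sub, eval₂_pow, eval₂_X, eval₂_C, sub_eq_zero] at h
    rw [h, AdjoinRoot.algebraMap_eq]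
  -- take n-th power
  have hint2 : IsIntegral R (algebraMap K L (c ^ n * a ^ q)) := by
    have := hint.pow n
    have hcalc : (algebraMap K L c * (AdjoinRoot.root p) ^ q) ^ n
        = algebraMap K L (c ^ n * a ^ q) := by
      rw [mul_pow, ← pow_mul, mul_comm q n, pow_mul, hroot, ← map_pow, ← map_pow, ← map_mul]
    rwa [hcalc] at this
  have hinj : Function.Injective (algebraMap K L) := (algebraMap K L).injective
  have hint3 : IsIntegral R (c ^ n * a ^ q) := (isIntegral_algebraMap_iff hinj).mp hint2
  obtain ⟨x, hx⟩ := IsIntegrallyClosed.isIntegral_iff.mp hint3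
  rcases eq_or_ne c 0 with hc0 | hc0
  · exact ⟨0, by simp [hc0]⟩
  rcases ValuationRing.isInteger_or_isInteger R c with ⟨r, hr⟩ | ⟨s, hs⟩
  · exact ⟨r, hr⟩
  by_cases hs_unit : IsUnit s
  · obtain ⟨w, rfl⟩ := hs_unit
    exact ⟨(w⁻¹ : Rˣ), by rw [map_units_inv, hs, inv_inv]⟩
  · exfalso
    -- s is a nonunit, so π ∣ s
    have hπs : π ∣ s := by
      have hmem : s ∈ IsLocalRing.maximalIdeal R := hs_unit
      rw [(IsDiscreteValuationRing.irreducible_iff_uniformizer π).mp hπ,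
        Ideal.mem_span_singleton] at hmem
      exact hmem
    -- key relation : x * s ^ n = (u * π) ^ q
    have hcs : c * algebraMap R K s = 1 := by
      rw [hs, mul_inv_cancel₀ hc0]
    have hrel : algebraMap R K (x * s ^ n) = algebraMap R K (((u : R) * π) ^ q) := by
      rw [map_mul, hx, map_pow, map_pow, ha]
      calc c ^ n * ((algebraMap R K) ((u:R) * π)) ^ q * ((algebraMap R K) s) ^ n
          = (c * algebraMap R K s) ^ n * ((algebraMap R K) ((u:R) * π)) ^ q := by ring
        _ = ((algebraMap R K) ((u:R) * π)) ^ q := by rw [hcs, one_pow, one_mul]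
    have hrel' : x * s ^ n = ((u : R) * π) ^ q :=
      IsFractionRing.injective R K hrel
    have hdvd : π ^ n ∣ (u : R) ^ q * π ^ q := by
      have h1 : π ^ n ∣ s ^ n := pow_dvd_pow_of_dvd hπs n
      have h2 := h1.trans (dvd_mul_left (s ^ n) x)
      rwa [hrel', mul_pow] at h2
    -- cancel π ^ q
    have hπ0 : π ≠ 0 := hπ.ne_zero
    have hdvd2 : π ^ (n - q) ∣ (u : R) ^ q := by
      obtain ⟨t, ht⟩ := hdvd
      refine ⟨t, ?_⟩
      have hn' : π ^ n = π ^ (n - q) * π ^ q := by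
        rw [← pow_add]; congr 1; omega
      have : π ^ q * (u : R) ^ q = π ^ q * (π ^ (n - q) * t) := by
        rw [← mul_assoc, mul_comm (π ^ q) (π ^ (n-q)), ← hn', mul_comm ((u:R)^q) (π^q)] at *
        rw [mul_comm] at ht
        linear_combination ht
      exact mul_left_cancel₀ (pow_ne_zero q hπ0) this
    have : IsUnit (π ^ (n - q)) := isUnit_of_dvd_unit hdvd2 (u ^ q).isUnit
    have hnq : n - q ≠ 0 := by omega
    exact hπ.not_isUnit (isUnit_of_dvd_unit (dvd_pow_self π hnq) this)
end

section
/- Let R be a discrete valuation ring with fraction field K and uniformizer π, let u ∈ Rˣ be a unit, and let n ≥ 1 and r be integers with 0 ≤ r < n. Let L = K[X]/(X^n − u·π^r) and let T denote the image of X in L. Let A be an R-subalgebra of L that is finitely generated as an R-module. Then A ∩ T·K ⊆ T·R; that is, for every c ∈ K, if c·T ∈ A then c ∈ R. -/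
open Polynomial

private lemma aux_stmt (R K : Type*) [CommRing R] [IsDomain R] [IsDiscreteValuationRing R]
    [Field K] [Algebra R K] [IsFractionRing R K]
    (π : R) (hπ : Irreducible π) (u : Rˣ) (n r : ℕ) (hn : 1 ≤ n) (hr : r < n)
    (a : K) (ha : a = algebraMap R K ((u : R) * π ^ r))
    (A : Subalgebra R (AdjoinRoot (X ^ n - C a)))
    (hA : A.toSubmodule.FG)
    (c : K)
    (hc : algebraMap K (AdjoinRoot (X ^ n - C a)) c * AdjoinRoot.root (X ^ n - C a) ∈ A) :
    ∃ ρ : R, algebraMap R K ρ = c := by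
  have hint : IsIntegral R (algebraMap K (AdjoinRoot (X ^ n - C a)) c * AdjoinRoot.root (X ^ n - C a)) :=
    IsIntegral.of_mem_of_fg A hA _ hc
  clear hc hA
  set f : K[X] := X ^ n - C a with hf
  set L := AdjoinRoot f with hL'
  have hn0 : n ≠ 0 := by omega
  have hdeg : f.degree = n := by
    rw [hf]; compute_degree!; simp [hn0]
  have hfmonic : f.Monic := monic_X_pow_sub_C a hn0
  have hL : Function.Injective (algebraMap K L) := by
    have : Nontrivial L := by
      refine AdjoinRoot.nontrivial f ?_
      rw [hdeg]; exact_mod_cast hn0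
    exact (algebraMap K L).injective
  have hroot : (AdjoinRoot.root f) ^ n = algebraMap K L a := by
    have h0 : AdjoinRoot.mk f f = 0 := AdjoinRoot.mk_self
    rw [hf] at h0
    rw [map_sub, map_pow, AdjoinRoot.mk_X] at h0
    have := sub_eq_zero.mp h0
    rw [this, AdjoinRoot.mk_C, AdjoinRoot.algebraMap_eq]
  have hint2 : IsIntegral R (c ^ n * a) := by
    have h1 : IsIntegral R ((algebraMap K L c * AdjoinRoot.root f) ^ n) := hint.pow n
    rw [mul_pow, hroot, ← map_pow, ← map_mul] at h1
    exact (isIntegral_algebraMap_iff hL).mp h1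
  obtain ⟨b, hb⟩ := IsIntegrallyClosed.isIntegral_iff.mp hint2
  rcases eq_or_ne c 0 with rfl | hc0
  · exact ⟨0, by simp⟩
  rcases ValuationRing.isInteger_or_isInteger R c with ⟨ρ, hρ⟩ | ⟨d, hd⟩
  · exact ⟨ρ, hρ⟩
  have key : (u : R) * π ^ r = b * d ^ n := by
    apply IsFractionRing.injective R K
    rw [map_mul (algebraMap R K) b, map_pow, hd, hb, ← ha,
      mul_comm (c ^ n) a, mul_assoc, ← mul_pow, mul_inv_cancel₀ hc0, one_pow, mul_one]
  have hdu : IsUnit d := by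
    by_contra hdu
    have hmem : d ∈ IsLocalRing.maximalIdeal R := hdu
    rw [hπ.maximalIdeal_eq, Ideal.mem_span_singleton] at hmem
    have h1 : π ^ n ∣ (u : R) * π ^ r := by
      rw [key]
      exact Dvd.dvd.mul_left (pow_dvd_pow_of_dvd hmem n) b
    have h2 : π ^ n ∣ π ^ r := (Units.isUnit u).dvd_mul_left.mp h1
    have := (pow_dvd_pow_iff hπ.ne_zero hπ.not_isUnit).mp h2
    omega
  obtain ⟨e, he⟩ := hdu.exists_left_inv
  refine ⟨e, ?_⟩
  have h3 : algebraMap R K e * algebraMap R K d = 1 := by rw [← map_mul, he, map_one]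
  rw [hd] at h3
  field_simp at h3
  exact h3

/-- Let `R` be a discrete valuation ring with fraction field `K` and uniformizer `π`,
`u ∈ Rˣ` a unit, and `n ≥ 1`, `0 ≤ r < n` integers. Let `L = K[X]/(X^n - u·π^r)` and
let `T` denote the image of `X` in `L`. Let `A` be an `R`-subalgebra of `L` that is
finitely generated as an `R`-module. Then `A ∩ T·K ⊆ T·R`: for every `c ∈ K`,
if `c·T ∈ A` then `c ∈ R`. -/
theorem stmt_1 (R K : Type*) [CommRing R] [IsDomain R] [IsDiscreteValuationRing R]
    [Field K] [Algebra R K] [IsFractionRing R K]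
    (π : R) (hπ : Irreducible π) (u : Rˣ) (n r : ℕ) (hn : 1 ≤ n) (hr : r < n)
    (A : Subalgebra R (AdjoinRoot (X ^ n - C (algebraMap R K ((u : R) * π ^ r)))))
    (hA : A.toSubmodule.FG)
    (c : K)
    (hc : algebraMap K (AdjoinRoot (X ^ n - C (algebraMap R K ((u : R) * π ^ r)))) c *
      AdjoinRoot.root (X ^ n - C (algebraMap R K ((u : R) * π ^ r))) ∈ A) :
    ∃ ρ : R, algebraMap R K ρ = c :=
  aux_stmt R K π hπ u n r hn hr _ rfl A hA c hc
end

section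
/- Let R be a discrete valuation ring with fraction field K and uniformizer π, let u ∈ Rˣ be a unit, and let n ≥ 1 be an integer. Let L = K[X]/(X^n − u·π) and let T denote the image of X in L, so that 1, T, …, T^{n−1} is a K-basis of L. Let A be an R-subalgebra of L that is finitely generated as an R-module and is graded in the following sense: for every a ∈ A, writing a = Σ_{q=0}^{n−1} c_q·T^q with c_q ∈ K, each homogeneous component c_q·T^q belongs to A. Then A is contained in the R-subalgebra of L generated by T (equivalently, A ⊆ R·1 ⊕ R·T ⊕ ⋯ ⊕ R·T^{n−1}). -/
open Polynomial

set_option maxHeartbeats 1000000 in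
theorem aux_graded_model {R K : Type*} [CommRing R] [IsDomain R] [IsDiscreteValuationRing R]
    [Field K] [Algebra R K] [IsFractionRing R K]
    (π : R) (hπ : Irreducible π) (u : Rˣ) (n : ℕ) (hn : 1 ≤ n)
    (a0 : K) (ha0 : a0 = algebraMap R K ((u : R) * π))
    (f : K[X]) (hfeq : f = X ^ n - C a0)
    (A : Subalgebra R (AdjoinRoot f))
    (hA : A.toSubmodule.FG)
    (hgraded : ∀ a ∈ A, ∀ c : ℕ → K,
      a = ∑ q ∈ Finset.range n,
        algebraMap K (AdjoinRoot f) (c q) * AdjoinRoot.root f ^ q →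
      ∀ q < n,
        algebraMap K (AdjoinRoot f) (c q) * AdjoinRoot.root f ^ q ∈ A) :
    A ≤ Algebra.adjoin R {AdjoinRoot.root f} := by
  classical
  subst hfeq
  have hnpos : 0 < n := hn
  have hf0 : (X ^ n - C a0 : K[X]) ≠ 0 := X_pow_sub_C_ne_zero hnpos a0
  have hdeg : (X ^ n - C a0 : K[X]).natDegree = n := natDegree_X_pow_sub_C
  have : Nontrivial (AdjoinRoot (X ^ n - C a0)) := AdjoinRoot.nontrivial _ (by
    rw [degree_X_pow_sub_C hnpos]; exact_mod_cast hnpos.ne')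
  have hinj : Function.Injective (algebraMap K (AdjoinRoot (X ^ n - C a0))) :=
    (algebraMap K (AdjoinRoot (X ^ n - C a0))).injective
  have hTn : AdjoinRoot.root (X ^ n - C a0) ^ n = algebraMap K (AdjoinRoot (X ^ n - C a0)) a0 := by
    have h := AdjoinRoot.eval₂_root (X ^ n - C a0)
    simpa only [eval₂_sub, eval₂_pow, eval₂_X, eval₂_C, sub_eq_zero,
      ← AdjoinRoot.algebraMap_eq] using h
  let pb := AdjoinRoot.powerBasis hf0
  have hdim : pb.dim = n := hdeg
  intro a ha
  set c : ℕ → K := fun q =>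
    if h : q < n then pb.basis.repr a ⟨q, by rw [hdim]; exact h⟩ else 0 with hc
  have hrepr : a = ∑ q ∈ Finset.range n,
      algebraMap K (AdjoinRoot (X ^ n - C a0)) (c q) * AdjoinRoot.root (X ^ n - C a0) ^ q := by
    conv_lhs => rw [← pb.basis.sum_repr a]
    rw [Finset.sum_range fun q =>
      algebraMap K (AdjoinRoot (X ^ n - C a0)) (c q) * AdjoinRoot.root (X ^ n - C a0) ^ q]
    refine Fintype.sum_equiv (finCongr hdim) _ _ fun i => ?_
    have hi : (i : ℕ) < n := lt_of_lt_of_le i.isLt hdim.le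
    rw [pb.basis_eq_pow, Algebra.smul_def]
    simp only [finCongr_apply, Fin.coe_cast, hc, dif_pos hi, Fin.eta]
    rfl
  rw [hrepr]
  refine Subalgebra.sum_mem _ fun q hq => ?_
  rw [Finset.mem_range] at hq
  have hmem : algebraMap K (AdjoinRoot (X ^ n - C a0)) (c q) *
      AdjoinRoot.root (X ^ n - C a0) ^ q ∈ A := hgraded a ha c hrepr q hq
  rcases eq_or_ne (c q) 0 with h0 | h0
  · rw [h0, map_zero, zero_mul]; exact Subalgebra.zero_mem _
  have hint : IsIntegral R (algebraMap K (AdjoinRoot (X ^ n - C a0)) (c q) *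
      AdjoinRoot.root (X ^ n - C a0) ^ q) :=
    IsIntegral.of_mem_of_fg A hA _ hmem
  have hintpow : IsIntegral R ((algebraMap K (AdjoinRoot (X ^ n - C a0)) (c q) *
      AdjoinRoot.root (X ^ n - C a0) ^ q) ^ n) := hint.pow n
  have heq : (algebraMap K (AdjoinRoot (X ^ n - C a0)) (c q) *
      AdjoinRoot.root (X ^ n - C a0) ^ q) ^ n =
      algebraMap K (AdjoinRoot (X ^ n - C a0)) (c q ^ n * a0 ^ q) := by
    rw [mul_pow, ← pow_mul, mul_comm q n, pow_mul, hTn, map_mul, map_pow, map_pow]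
  rw [heq, isIntegral_algebraMap_iff hinj] at hintpow
  obtain ⟨r, hr⟩ := IsIntegrallyClosed.isIntegral_iff.mp hintpow
  have hcR : ∃ s : R, algebraMap R K s = c q := by
    rcases ValuationRing.isInteger_or_isInteger R (c q) with ⟨s, hs⟩ | ⟨d, hd⟩
    · exact ⟨s, hs⟩
    · have hd0 : d ≠ 0 := by
        rintro rfl
        rw [map_zero] at hd
        exact h0 (inv_eq_zero.mp hd.symm)
      have hdK : algebraMap R K d ≠ 0 := fun h =>
        hd0 (IsFractionRing.injective R K (by rw [h, map_zero]))
      have hcinv : c q = (algebraMap R K d)⁻¹ := by rw [hd, inv_inv]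
      by_cases hdu : IsUnit d
      · obtain ⟨v, rfl⟩ := hdu
        refine ⟨(v⁻¹ : Rˣ), ?_⟩
        rw [hcinv]
        exact eq_inv_of_mul_eq_one_left (by rw [← map_mul, Units.inv_mul, map_one])
      · exfalso
        obtain ⟨k, w, hw⟩ := IsDiscreteValuationRing.eq_unit_mul_pow_irreducible hd0 hπ
        have hk : 1 ≤ k := by
          rcases Nat.eq_zero_or_pos k with rfl | h
          · exact absurd (by rw [hw, pow_zero, mul_one]; exact w.isUnit) hdu
          · exact h
        have key : ((u : R) * π) ^ q = r * d ^ n := by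
          apply IsFractionRing.injective R K
          rw [map_mul, map_pow, map_pow, hr, hcinv, ha0]
          field_simp
          rw [one_div, inv_pow, mul_assoc, inv_mul_cancel₀ (pow_ne_zero _ hdK), mul_one]
        have h1 : π ^ n ∣ d ^ n := by
          rw [hw, mul_pow, ← pow_mul]
          exact Dvd.dvd.mul_left (pow_dvd_pow π (Nat.le_mul_of_pos_left n hk)) _
        have h2 : d ^ n ∣ ((u : R) * π) ^ q := ⟨r, by rw [key]; ring⟩
        have h3 : ((u : R) * π) ^ q ∣ π ^ q := by
          refine ⟨((u⁻¹ : Rˣ) : R) ^ q, ?_⟩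
          rw [← mul_pow]
          congr 1
          rw [mul_comm (u : R) π, mul_assoc, Units.mul_inv, mul_one]
        have hdvd : π ^ n ∣ π ^ q := (h1.trans h2).trans h3
        have := (pow_dvd_pow_iff hπ.ne_zero hπ.not_isUnit).mp hdvd
        omega
  obtain ⟨s, hs⟩ := hcR
  rw [← hs, ← IsScalarTower.algebraMap_apply R K (AdjoinRoot (X ^ n - C a0))]
  have final : algebraMap R (AdjoinRoot (X ^ n - C a0)) s *
      AdjoinRoot.root (X ^ n - C a0) ^ q ∈
      Algebra.adjoin R {AdjoinRoot.root (X ^ n - C a0)} :=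
    mul_mem (Subalgebra.algebraMap_mem _ s)
      (pow_mem (Algebra.subset_adjoin (Set.mem_singleton _)) q)
  convert final using 2

/-- Let `R` be a discrete valuation ring with fraction field `K` and uniformizer `π`,
`u ∈ Rˣ` a unit, `n ≥ 1`. Let `L = K[X]/(X^n - u·π)` and let `T` be the image of `X`
in `L`, so that `1, T, …, T^(n-1)` is a `K`-basis of `L`. Let `A` be an `R`-subalgebra
of `L`, finitely generated as an `R`-module, and graded: for every `a ∈ A`, writing
`a = Σ_{q<n} c_q·T^q` with `c_q ∈ K`, each homogeneous component `c_q·T^q` belongs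
to `A`. Then `A` is contained in the `R`-subalgebra of `L` generated by `T`. -/
theorem stmt_2 (R K : Type*) [CommRing R] [IsDomain R] [IsDiscreteValuationRing R]
    [Field K] [Algebra R K] [IsFractionRing R K]
    (π : R) (hπ : Irreducible π) (u : Rˣ) (n : ℕ) (hn : 1 ≤ n)
    (A : Subalgebra R (AdjoinRoot (X ^ n - C (algebraMap R K ((u : R) * π)))))
    (hA : A.toSubmodule.FG)
    (hgraded : ∀ a ∈ A, ∀ c : ℕ → K,
      a = ∑ q ∈ Finset.range n,
        algebraMap K (AdjoinRoot (X ^ n - C (algebraMap R K ((u : R) * π)))) (c q) *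
          AdjoinRoot.root (X ^ n - C (algebraMap R K ((u : R) * π))) ^ q →
      ∀ q < n,
        algebraMap K (AdjoinRoot (X ^ n - C (algebraMap R K ((u : R) * π)))) (c q) *
          AdjoinRoot.root (X ^ n - C (algebraMap R K ((u : R) * π))) ^ q ∈ A) :
    A ≤ Algebra.adjoin R {AdjoinRoot.root (X ^ n - C (algebraMap R K ((u : R) * π)))} := by
  exact aux_graded_model π hπ u n hn _ rfl _ rfl A hA hgraded
end
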